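/- arXiv:0802.2747 — 6 statements merged into one kernel-verified Lean document; each statement's English description precedes it below -/
import Mathlib

section
/- Any automorphism of a once-bordered fatgraph (a connected fatgraph with exactly one boundary cycle, all vertices at least trivalent except one univalent vertex) is the identity. -/
open Classical

/-- A fatgraph on a finite set `D` of oriented edges (darts): `rev` is the
fixed-point-free involution reversing the orientation of an edge, and `rot`
records the cyclic ordering of the oriented edges pointing to each vertex
(the vertices are the orbits of `rot`).  The graph is required to be
connected. -/
structure Fatgraph (D : Type) [Fintype D] [DecidableEq D] where
  rev : Equiv.Perm D
  rot : Equiv.Perm D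
  rev_invol : ∀ d, rev (rev d) = d
  rev_ne : ∀ d, rev d ≠ d
  conn : ∀ d d' : D, ∃ g ∈ Subgroup.closure ({rev, rot} : Set (Equiv.Perm D)), g d = d'

/-- A once-bordered fatgraph: the boundary-cycle permutation `rev * rot`
(sending an oriented edge `e` pointing to a vertex `v` to the next oriented
edge in the cyclic order at `v`, oriented away from `v`) acts transitively
(one boundary cycle), there is a unique univalent vertex, whose incident
dart is `tail`, and all other vertices have valence at least three. -/
structure BorderedFatgraph (D : Type) [Fintype D] [DecidableEq D] extends Fatgraph D where
  tail : D
  tail_fix : rot tail = tail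
  tail_uniq : ∀ d, rot d = d → d = tail
  val_ge_three : ∀ d, d ≠ tail → rot (rot d) ≠ d
  oneBoundary : ∀ d d' : D, ∃ n : ℕ, ((rev * rot) ^ n) d = d'

variable {D : Type} [Fintype D] [DecidableEq D]

/-- Two darts point to the same vertex iff they lie in the same `rot`-orbit. -/
def vertRel (rot : Equiv.Perm D) (a b : D) : Prop := ∃ n : ℤ, (rot ^ n) a = b

/-- The setoid of darts whose classes are the vertices of the fatgraph. -/
def vSetoid (rot : Equiv.Perm D) : Setoid D where
  r := vertRel rot
  iseqv := by
    constructor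
    · exact fun a => ⟨0, rfl⟩
    · rintro a b ⟨n, rfl⟩
      exact ⟨-n, by rw [← Equiv.Perm.mul_apply, ← zpow_add, neg_add_cancel, zpow_zero,
        Equiv.Perm.one_apply]⟩
    · rintro a b c ⟨n, rfl⟩ ⟨m, rfl⟩
      exact ⟨m + n, by rw [zpow_add, Equiv.Perm.mul_apply]⟩

/-- Number of vertices touched by a set `S` of darts. -/
noncomputable def vCount (rot : Equiv.Perm D) (S : Finset D) : ℕ :=
  (S.image (Quotient.mk (vSetoid rot))).card

/-- A set of darts, closed under reversal, forms a (sub)tree:  it is connected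
as a subgraph (darts can be joined by walking around vertices and across edges
of `S`), and the number of vertices it touches exceeds its number of edges by
one. -/
def IsSubgraphTree (rev rot : Equiv.Perm D) (S : Finset D) : Prop :=
  (∀ a ∈ S, rev a ∈ S) ∧
  (∀ a ∈ S, ∀ b ∈ S, Relation.ReflTransGen
      (fun x y => vertRel rot x y ∨ (x ∈ S ∧ y = rev x)) a b) ∧
  (S = ∅ ∨ vCount rot S = S.card / 2 + 1)

/-- A spanning tree: a subgraph tree touching every vertex. -/
def IsSpanningTree (rev rot : Equiv.Perm D) (S : Finset D) : Prop :=
  IsSubgraphTree rev rot S ∧ ∀ d : D, ∃ a ∈ S, vertRel rot a d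

/-- Position of a dart in the boundary traversal that starts at the univalent
vertex of the tail (i.e. with the tail oriented away from it, the dart `rev t`). -/
noncomputable def bPos (rev rot : Equiv.Perm D) (t d : D) : ℕ :=
  if h : ∃ n : ℕ, ((rev * rot) ^ n) (rev t) = d then Nat.find h else 0

/-- The greedy algorithm: traverse the boundary cycle starting at the tail and
add each edge encountered whenever the result is still a tree. -/
noncomputable def greedyTree (rev rot : Equiv.Perm D) (t : D) : Finset D :=
  (List.range (Fintype.card D)).foldl
    (fun S n =>
      let d := ((rev * rot) ^ n) (rev t)
      let S' := insert d (insert (rev d) S)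
      if IsSubgraphTree rev rot S' then S' else S) ∅

/-- Any automorphism of a once-bordered fatgraph (a bijection of
the oriented edges commuting with edge reversal and with the cyclic orderings
at the vertices) is the identity. -/
theorem bordered_fatgraph_automorphism_trivial
    (D : Type) [Fintype D] [DecidableEq D] (G : BorderedFatgraph D)
    (φ : Equiv.Perm D)
    (hrev : ∀ d, φ (G.rev d) = G.rev (φ d))
    (hrot : ∀ d, φ (G.rot d) = G.rot (φ d)) :
    φ = 1 := by
  have htail : φ G.tail = G.tail := by
    apply G.tail_uniq
    rw [← hrot, G.tail_fix]
  have hrt : φ (G.rev G.tail) = G.rev G.tail := by rw [hrev, htail]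
  have hcomm : ∀ n x, φ (((G.rev * G.rot) ^ n) x) = ((G.rev * G.rot) ^ n) (φ x) := by
    intro n
    induction n with
    | zero => intro x; simp
    | succ k ih =>
      intro x
      rw [pow_succ', Equiv.Perm.mul_apply, Equiv.Perm.mul_apply, hrev, hrot, ih,
        Equiv.Perm.mul_apply, Equiv.Perm.mul_apply]
  ext d
  obtain ⟨n, hn⟩ := G.oneBoundary (G.rev G.tail) d
  rw [Equiv.Perm.one_apply, ← hn, hcomm, hrt]
end

section
/- In a once-bordered fatgraph, traversal of the unique boundary cycle starting at the univalent vertex of the tail visits every oriented edge exactly once, i.e., each edge appears exactly once with each of its two orientations. -/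
open Classical

variable {D : Type} [Fintype D] [DecidableEq D]

/-- In a once-bordered fatgraph, the traversal of the unique
boundary cycle starting at the univalent vertex of the tail (so starting with
the tail oriented away from that vertex) visits every oriented edge exactly
once. -/
theorem boundary_traversal_visits_each_oriented_edge_once
    (D : Type) [Fintype D] [DecidableEq D] (G : BorderedFatgraph D) :
    Function.Bijective (fun n : Fin (Fintype.card D) =>
      ((G.rev * G.rot) ^ (n : ℕ)) (G.rev G.tail)) := by
  set σ := G.rev * G.rot with hσ
  set x := G.rev G.tail with hx
  rw [Fintype.bijective_iff_injective_and_card]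
  refine ⟨?_, by simp⟩
  have key : ∀ k : ℕ, k ≠ 0 → (σ ^ k) x = x → Fintype.card D ≤ k := by
    intro k hk hfix
    have hq : ∀ q : ℕ, ((σ ^ k) ^ q) x = x := by
      intro q
      induction q with
      | zero => simp
      | succ q ih => rw [pow_succ, Equiv.Perm.mul_apply, hfix, ih]
    have hmod : ∀ n : ℕ, (σ ^ n) x = (σ ^ (n % k)) x := by
      intro n
      conv_lhs => rw [← Nat.mod_add_div n k]
      rw [pow_add, Equiv.Perm.mul_apply, pow_mul, hq]
    have hsurj : Function.Surjective (fun i : Fin k => (σ ^ (i : ℕ)) x) := by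
      intro d
      obtain ⟨n, hn⟩ := G.oneBoundary x d
      exact ⟨⟨n % k, Nat.mod_lt _ (Nat.pos_of_ne_zero hk)⟩, by
        simpa using ((hmod n).symm.trans hn)⟩
    simpa using Fintype.card_le_of_surjective _ hsurj
  intro a b hab
  simp only at hab
  wlog h : (a : ℕ) ≤ b generalizing a b
  · exact (this hab.symm (le_of_not_ge h)).symm
  have hk : (σ ^ ((b : ℕ) - a)) x = x := by
    have hb : (σ ^ (b : ℕ)) x = (σ ^ ((b : ℕ) - a)) ((σ ^ (a : ℕ)) x) := by
      conv_lhs => rw [← Nat.sub_add_cancel h, pow_add, Equiv.Perm.mul_apply]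
    have hcomm : (σ ^ ((b : ℕ) - a)) ((σ ^ (a : ℕ)) x)
        = (σ ^ (a : ℕ)) ((σ ^ ((b : ℕ) - a)) x) := by
      have e1 : (σ ^ (((b : ℕ) - a) + a)) x = (σ ^ ((b : ℕ) - a)) ((σ ^ (a : ℕ)) x) := by
        rw [pow_add, Equiv.Perm.mul_apply]
      have e2 : (σ ^ ((a : ℕ) + ((b : ℕ) - a))) x = (σ ^ (a : ℕ)) ((σ ^ ((b : ℕ) - a)) x) := by
        rw [pow_add, Equiv.Perm.mul_apply]
      rw [← e1, ← e2, Nat.add_comm]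
    have := hab.trans (hb.trans hcomm)
    exact ((σ ^ (a : ℕ)).injective this).symm
  have : (b : ℕ) - a = 0 := by
    by_contra hne
    have := key _ hne hk
    omega
  exact Fin.ext (by omega)
end

section
/- Let G be a once-bordered fatgraph with greedy spanning tree T_G, and let < denote the boundary-traversal order on oriented edges. Then an edge e of G belongs to T_G if and only if its preferred orientation e satisfies e ≤ x for all oriented edges x pointing to the same vertex as e (i.e., with v(x) = v(e)). -/
open Classical

variable {D : Type} [Fintype D] [DecidableEq D]

namespace GreedyAux
variable (G : BorderedFatgraph D)

/-- The boundary traversal. -/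
noncomputable def gf (n : ℕ) : D := ((G.rev * G.rot) ^ n) (G.rev G.tail)

lemma gf_zero : gf G 0 = G.rev G.tail := by simp [gf]

lemma gf_succ (n : ℕ) : gf G (n + 1) = G.rev (G.rot (gf G n)) := by
  simp [gf, pow_succ', Equiv.Perm.mul_apply]

lemma rev_gf_succ (n : ℕ) : G.rev (gf G (n + 1)) = G.rot (gf G n) := by
  rw [gf_succ, G.rev_invol]

lemma vertRel_refl (a : D) : vertRel G.rot a a := ⟨0, rfl⟩

lemma vertRel_symm {a b : D} (h : vertRel G.rot a b) : vertRel G.rot b a :=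
  (vSetoid G.rot).iseqv.symm h

lemma vertRel_trans {a b c : D} (h : vertRel G.rot a b) (h' : vertRel G.rot b c) :
    vertRel G.rot a c := (vSetoid G.rot).iseqv.trans h h'

lemma vertRel_rot (a : D) : vertRel G.rot a (G.rot a) := ⟨1, by simp⟩

lemma zpow_tail (n : ℤ) : (G.rot ^ n) G.tail = G.tail := by
  have h1 : G.rot⁻¹ G.tail = G.tail := by
    rw [Equiv.Perm.inv_def, Equiv.symm_apply_eq, G.tail_fix]
  induction n using Int.induction_on with
  | zero => rfl
  | succ k ih => rw [add_comm, zpow_add, Equiv.Perm.mul_apply, zpow_one, ih, G.tail_fix]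
  | pred k ih =>
      rw [sub_eq_add_neg, zpow_add, Equiv.Perm.mul_apply, zpow_neg_one, h1, ih]

lemma vertRel_tail_iff (x : D) : vertRel G.rot G.tail x ↔ x = G.tail := by
  constructor
  · rintro ⟨n, rfl⟩; exact zpow_tail G n
  · rintro rfl; exact vertRel_refl G _


lemma gf_surj_all (d : D) : ∃ n, gf G n = d := G.oneBoundary _ d

lemma gf_succ' (n : ℕ) : gf G (n + 1) = (G.rev * G.rot) (gf G n) := by
  simp [gf, pow_succ', Equiv.Perm.mul_apply]

lemma gf_surj_lt (d : D) : ∃ n < orderOf (G.rev * G.rot), gf G n = d := by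
  obtain ⟨n, hn⟩ := gf_surj_all G d
  refine ⟨n % orderOf (G.rev * G.rot), Nat.mod_lt _ (orderOf_pos _), ?_⟩
  rw [← hn]; unfold gf; rw [pow_mod_orderOf]

lemma gf_inj_aux {a b : ℕ} (hab : a ≤ b) (hb : b < orderOf (G.rev * G.rot))
    (h : gf G a = gf G b) : a = b := by
  set σ := G.rev * G.rot with hσ
  have key : (σ ^ (b - a)) (G.rev G.tail) = G.rev G.tail := by
    apply (σ ^ a).injective
    rw [← Equiv.Perm.mul_apply, ← pow_add]
    have hba : a + (b - a) = b := by omega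
    rw [hba]
    exact h.symm
  have hone : σ ^ (b - a) = 1 := by
    ext d
    obtain ⟨m, hm⟩ := gf_surj_all G d
    rw [← hm]
    show (σ ^ (b - a)) ((σ ^ m) (G.rev G.tail)) = _
    rw [← Equiv.Perm.mul_apply, ← pow_add, add_comm, pow_add, Equiv.Perm.mul_apply, key]
    rfl
  have hdvd := orderOf_dvd_of_pow_eq_one hone
  have : b - a = 0 := Nat.eq_zero_of_dvd_of_lt hdvd (by omega) |>.symm ▸ rfl
  omega

lemma gf_inj {a b : ℕ} (ha : a < orderOf (G.rev * G.rot)) (hb : b < orderOf (G.rev * G.rot))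
    (h : gf G a = gf G b) : a = b := by
  rcases le_total a b with hab | hab
  · exact gf_inj_aux G hab hb h
  · exact (gf_inj_aux G hab ha h.symm).symm

lemma orderOf_sigma : orderOf (G.rev * G.rot) = Fintype.card D := by
  have himg : Finset.image (gf G) (Finset.range (orderOf (G.rev * G.rot))) = Finset.univ := by
    apply Finset.eq_univ_of_forall
    intro d
    obtain ⟨n, hn, h⟩ := gf_surj_lt G d
    exact Finset.mem_image.2 ⟨n, Finset.mem_range.2 hn, h⟩
  have hcard := Finset.card_image_of_injOn
    (f := gf G) (s := Finset.range (orderOf (G.rev * G.rot)))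
    (fun a ha b hb h => gf_inj G (Finset.mem_range.1 ha) (Finset.mem_range.1 hb) h)
  rw [himg, Finset.card_univ, Finset.card_range] at hcard
  exact hcard.symm

lemma gf_surj_lt_card (d : D) : ∃ n < Fintype.card D, gf G n = d := by
  rw [← orderOf_sigma]; exact gf_surj_lt G d

lemma gf_inj_card {a b : ℕ} (ha : a < Fintype.card D) (hb : b < Fintype.card D)
    (h : gf G a = gf G b) : a = b :=
  gf_inj G (orderOf_sigma G ▸ ha) (orderOf_sigma G ▸ hb) h

lemma sigma_pow_card : (G.rev * G.rot) ^ Fintype.card D = 1 := by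
  rw [← orderOf_sigma]; exact pow_orderOf_eq_one _

lemma bPos_spec (d : D) : gf G (bPos G.rev G.rot G.tail d) = d := by
  have h : ∃ n : ℕ, ((G.rev * G.rot) ^ n) (G.rev G.tail) = d := gf_surj_all G d
  rw [bPos, dif_pos h]
  exact Nat.find_spec h

lemma bPos_min' (d : D) {n : ℕ} (h : gf G n = d) : bPos G.rev G.rot G.tail d ≤ n := by
  have h' : ∃ n : ℕ, ((G.rev * G.rot) ^ n) (G.rev G.tail) = d := gf_surj_all G d
  rw [bPos, dif_pos h']
  exact Nat.find_min' h' h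

lemma bPos_lt_card (d : D) : bPos G.rev G.rot G.tail d < Fintype.card D := by
  obtain ⟨n, hn, h⟩ := gf_surj_lt_card G d
  exact lt_of_le_of_lt (bPos_min' G d h) hn

lemma bPos_gf {n : ℕ} (h : n < Fintype.card D) : bPos G.rev G.rot G.tail (gf G n) = n :=
  gf_inj_card G (bPos_lt_card G _) h (bPos_spec G _)

include G in
lemma two_le_card : 2 ≤ Fintype.card D :=
  Fintype.one_lt_card_iff_nontrivial.2 ⟨⟨G.rev G.tail, G.tail, G.rev_ne G.tail⟩⟩

lemma gf_card : gf G (Fintype.card D) = G.rev G.tail := by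
  unfold gf; rw [sigma_pow_card]; rfl

lemma gf_pred : gf G (Fintype.card D - 1) = G.tail := by
  apply (G.rev * G.rot).injective
  have h1 : (G.rev * G.rot) (gf G (Fintype.card D - 1)) = gf G (Fintype.card D) := by
    rw [← gf_succ']
    congr 1
    have := two_le_card G
    omega
  rw [h1, gf_card]
  show _ = G.rev (G.rot G.tail)
  rw [G.tail_fix]

lemma bPos_tail : bPos G.rev G.rot G.tail G.tail = Fintype.card D - 1 := by
  have h : Fintype.card D - 1 < Fintype.card D := by have := two_le_card G; omega
  have h2 := bPos_gf G h
  rwa [gf_pred G] at h2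

lemma bPos_rev_tail : bPos G.rev G.rot G.tail (G.rev G.tail) = 0 := by
  have h : 0 < Fintype.card D := by have := two_le_card G; omega
  have h2 := bPos_gf G h
  rwa [gf_zero G] at h2


/-- The greedy step function (identical to the one inside `greedyTree`). -/
noncomputable def gstep (S : Finset D) (n : ℕ) : Finset D :=
  let d := ((G.rev * G.rot) ^ n) (G.rev G.tail)
  let S' := insert d (insert (G.rev d) S)
  if IsSubgraphTree G.rev G.rot S' then S' else S

noncomputable def SS (n : ℕ) : Finset D := (List.range n).foldl (gstep G) ∅

lemma greedy_eq_SS : greedyTree G.rev G.rot G.tail = SS G (Fintype.card D) := rfl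

lemma SS_succ (n : ℕ) : SS G (n + 1) = gstep G (SS G n) n := by
  rw [SS, List.range_succ, List.foldl_append, List.foldl_cons, List.foldl_nil]
  rfl

lemma gstep_eq (S : Finset D) (n : ℕ) :
    gstep G S n =
      if IsSubgraphTree G.rev G.rot (insert (gf G n) (insert (G.rev (gf G n)) S))
      then insert (gf G n) (insert (G.rev (gf G n)) S) else S := rfl

lemma mk_eq_iff {a b : D} :
    Quotient.mk (vSetoid G.rot) a = Quotient.mk (vSetoid G.rot) b ↔ vertRel G.rot a b := by
  constructor
  · intro h
    exact Quotient.exact h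
  · intro h
    exact Quotient.sound (s := vSetoid G.rot) h

lemma vCount_insert_mem {S : Finset D} {x : D} (h : ∃ a ∈ S, vertRel G.rot a x) :
    vCount G.rot (insert x S) = vCount G.rot S := by
  obtain ⟨a, ha, hr⟩ := h
  unfold vCount
  rw [Finset.image_insert, Finset.insert_eq_self.2]
  exact Finset.mem_image.2 ⟨a, ha, (mk_eq_iff G).2 hr⟩

lemma vCount_insert_not_mem {S : Finset D} {x : D} (h : ¬ ∃ a ∈ S, vertRel G.rot a x) :
    vCount G.rot (insert x S) = vCount G.rot S + 1 := by
  unfold vCount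
  rw [Finset.image_insert, Finset.card_insert_of_notMem]
  intro hmem
  obtain ⟨a, ha, heq⟩ := Finset.mem_image.1 hmem
  exact h ⟨a, ha, (mk_eq_iff G).1 heq⟩

lemma rel_symm {S : Finset D} (hS : ∀ a ∈ S, G.rev a ∈ S) :
    Symmetric (fun x y => vertRel G.rot x y ∨ (x ∈ S ∧ y = G.rev x)) := by
  rintro x y (h | ⟨hx, rfl⟩)
  · exact Or.inl (vertRel_symm G h)
  · exact Or.inr ⟨hS x hx, (G.rev_invol x).symm⟩

def AccP (m : ℕ) : Prop :=
  gf G m ≠ G.tail ∧ ∀ j < m, ¬ vertRel G.rot (gf G j) (gf G m)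

def Inv (n : ℕ) : Prop :=
  IsSubgraphTree G.rev G.rot (SS G n) ∧
  G.tail ∈ SS G n ∧
  (∀ x : D, (∃ a ∈ SS G n, vertRel G.rot a x) ↔
      (vertRel G.rot G.tail x ∨ ∃ m < n, vertRel G.rot (gf G m) x)) ∧
  (∀ e : D, e ∈ SS G n ↔ ∃ m < n, (gf G m = e ∨ gf G m = G.rev e) ∧ AccP G m)

lemma tree_pair : IsSubgraphTree G.rev G.rot (insert (G.rev G.tail) (insert G.tail ∅)) := by
  have hst : G.rev G.tail ≠ G.tail := G.rev_ne _
  refine ⟨?_, ?_, Or.inr ?_⟩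
  · intro a ha
    simp only [Finset.mem_insert, Finset.notMem_empty, or_false] at ha ⊢
    rcases ha with rfl | rfl
    · exact Or.inr (G.rev_invol _)
    · exact Or.inl rfl
  · intro a ha b hb
    simp only [Finset.mem_insert, Finset.notMem_empty, or_false] at ha hb
    have hstep : ∀ c, c ∈ insert (G.rev G.tail) (insert G.tail (∅ : Finset D)) →
        Relation.ReflTransGen
          (fun x y => vertRel G.rot x y ∨
            (x ∈ insert (G.rev G.tail) (insert G.tail (∅ : Finset D)) ∧ y = G.rev x))
          G.tail c := by
      intro c hc
      simp only [Finset.mem_insert, Finset.notMem_empty, or_false] at hc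
      rcases hc with rfl | rfl
      · exact Relation.ReflTransGen.single (Or.inr ⟨by simp, rfl⟩)
      · exact Relation.ReflTransGen.refl
    have hsym : Symmetric (Relation.ReflTransGen _) := (@Relation.ReflTransGen.symmetric _ _
      ⟨rel_symm G (S := insert (G.rev G.tail) (insert G.tail ∅)) ?_⟩).symm
    · rcases ha with rfl | rfl <;> rcases hb with rfl | rfl
      · exact Relation.ReflTransGen.refl
      · exact hsym (hstep _ (by simp))
      · exact hstep _ (by simp)
      · exact Relation.ReflTransGen.refl
    · intro a ha
      simp only [Finset.mem_insert, Finset.notMem_empty, or_false] at ha ⊢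
      rcases ha with rfl | rfl
      · exact Or.inr (G.rev_invol _)
      · exact Or.inl rfl
  · have hne : ¬ vertRel G.rot G.tail (G.rev G.tail) := by
      rw [vertRel_tail_iff]
      exact hst
    have h1 : vCount G.rot (insert G.tail (∅ : Finset D)) = 1 := by
      unfold vCount
      simp
    have h2 : vCount G.rot (insert (G.rev G.tail) (insert G.tail (∅ : Finset D))) = 2 := by
      rw [vCount_insert_not_mem G, h1]
      rintro ⟨a, ha, hr⟩
      simp only [Finset.mem_insert, Finset.notMem_empty, or_false] at ha
      subst ha
      exact hne hr
    rw [h2, Finset.card_insert_of_notMem (by simp [hst]), Finset.card_insert_of_notMem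
      (by simp)]
    simp

lemma SS_one : SS G 1 = insert (G.rev G.tail) (insert G.tail ∅) := by
  have h0 : gf G 0 = G.rev G.tail := gf_zero G
  have : SS G 1 = gstep G (SS G 0) 0 := SS_succ G 0
  rw [this]
  have hSS0 : SS G 0 = ∅ := rfl
  rw [hSS0, gstep_eq, h0, G.rev_invol, if_pos (tree_pair G)]


lemma inv_one : Inv G 1 := by
  have hs := SS_one G
  have h0 : gf G 0 = G.rev G.tail := gf_zero G
  have hst : G.rev G.tail ≠ G.tail := G.rev_ne _
  refine ⟨by rw [hs]; exact tree_pair G, by simp [hs], ?_, ?_⟩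
  · intro x
    constructor
    · rintro ⟨a, ha, hr⟩
      rw [hs] at ha
      simp only [Finset.mem_insert, Finset.notMem_empty, or_false] at ha
      rcases ha with rfl | rfl
      · exact Or.inr ⟨0, by omega, by rwa [h0]⟩
      · exact Or.inl hr
    · rintro (h | ⟨m, hm, h⟩)
      · exact ⟨G.tail, by simp [hs], h⟩
      · have hm0 : m = 0 := by omega
        subst hm0
        exact ⟨G.rev G.tail, by simp [hs], by rwa [h0] at h⟩
  · intro e
    have hacc0 : AccP G 0 := ⟨by rw [h0]; exact hst, fun j hj => absurd hj (by omega)⟩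
    rw [hs]
    simp only [Finset.mem_insert, Finset.notMem_empty, or_false]
    constructor
    · rintro (rfl | rfl)
      · exact ⟨0, by omega, Or.inl h0, hacc0⟩
      · exact ⟨0, by omega, Or.inr (by rw [h0]), hacc0⟩
    · rintro ⟨m, hm, hor, -⟩
      have hm0 : m = 0 := by omega
      subst hm0
      rcases hor with h | h
      · exact Or.inl (by rw [← h, h0])
      · right
        have := congrArg G.rev h
        rw [G.rev_invol] at this
        rw [← this, h0, G.rev_invol]

lemma inv_succ (n : ℕ) (hn : 1 ≤ n) (ih : Inv G n) : Inv G (n + 1) := by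
  obtain ⟨htree, htmem, htouch, hmem⟩ := ih
  set S := SS G n with hS
  set d := gf G n with hd
  have hScl : ∀ a ∈ S, G.rev a ∈ S := htree.1
  have hconn := htree.2.1
  have hSne : S ≠ ∅ := by
    intro h
    rw [h] at htmem
    simp at htmem
  have hcount : vCount G.rot S = S.card / 2 + 1 := htree.2.2.resolve_left hSne
  have hrevd : G.rev d = G.rot (gf G (n - 1)) := by
    have h := rev_gf_succ G (n - 1)
    have hn1 : n - 1 + 1 = n := by omega
    rw [hn1] at h
    exact h
  have hrel_revd : vertRel G.rot (gf G (n - 1)) (G.rev d) := by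
    rw [hrevd]
    exact vertRel_rot G _
  have htouch_revd : ∃ a ∈ S, vertRel G.rot a (G.rev d) :=
    (htouch _).2 (Or.inr ⟨n - 1, by omega, hrel_revd⟩)
  by_cases hacc : AccP G n
  · -- accept case
    have hdnt : ¬ ∃ a ∈ S, vertRel G.rot a d := by
      rintro h
      rcases (htouch d).1 h with h' | ⟨m, hm, h'⟩
      · exact hacc.1 ((vertRel_tail_iff G d).1 h')
      · exact hacc.2 m hm h'
    have hdS : d ∉ S := fun h => hdnt ⟨d, h, vertRel_refl G d⟩
    have hrdS : G.rev d ∉ S := by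
      intro h
      have := hScl _ h
      rw [G.rev_invol] at this
      exact hdS this
    have hdne : d ≠ G.rev d := fun h => G.rev_ne d h.symm
    set S' := insert d (insert (G.rev d) S) with hS'
    have hsub : S ⊆ S' := fun a ha => by simp [hS', Finset.mem_insert, ha]
    have hS'cl : ∀ a ∈ S', G.rev a ∈ S' := by
      intro a ha
      simp only [hS', Finset.mem_insert] at ha ⊢
      rcases ha with rfl | rfl | ha
      · exact Or.inr (Or.inl rfl)
      · exact Or.inl (G.rev_invol d)
      · exact Or.inr (Or.inr (hScl _ ha))
    have hdS' : d ∈ S' := by simp [hS']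
    have hrdS' : G.rev d ∈ S' := by simp [hS']
    have hS'conn : ∀ a ∈ S', ∀ b ∈ S', Relation.ReflTransGen
        (fun x y => vertRel G.rot x y ∨ (x ∈ S' ∧ y = G.rev x)) a b := by
      have hsym : Symmetric (Relation.ReflTransGen _) :=
        (@Relation.ReflTransGen.symmetric _ _ ⟨rel_symm G hS'cl⟩).symm
      have hpiv : ∀ a ∈ S', Relation.ReflTransGen
          (fun x y => vertRel G.rot x y ∨ (x ∈ S' ∧ y = G.rev x)) a d := by
        intro a ha
        simp only [hS', Finset.mem_insert] at ha
        rcases ha with rfl | rfl | ha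
        · exact Relation.ReflTransGen.refl
        · exact Relation.ReflTransGen.single (Or.inr ⟨hrdS', (G.rev_invol _).symm⟩)
        · obtain ⟨c, hc, hcr⟩ := htouch_revd
          have h1 : Relation.ReflTransGen
              (fun x y => vertRel G.rot x y ∨ (x ∈ S' ∧ y = G.rev x)) a c :=
            Relation.ReflTransGen.mono
            (fun x y h => by
              rcases h with h | ⟨hx, he⟩
              · exact Or.inl h
              · exact Or.inr ⟨hsub hx, he⟩) _ _ (hconn a ha c hc)
          exact (h1.tail (Or.inl hcr)).tail (Or.inr ⟨hrdS', (G.rev_invol _).symm⟩)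
      intro a ha b hb
      exact (hpiv a ha).trans (hsym (hpiv b hb))
    have hcard' : S'.card = S.card + 2 := by
      rw [hS', Finset.card_insert_of_notMem (by simp [hdne, hdS]),
        Finset.card_insert_of_notMem hrdS]
    have hvc' : vCount G.rot S' = vCount G.rot S + 1 := by
      rw [hS']
      rw [vCount_insert_not_mem G, vCount_insert_mem G htouch_revd]
      rintro ⟨a, ha, hr⟩
      rcases Finset.mem_insert.1 ha with rfl | ha
      · obtain ⟨c, hc, hcr⟩ := htouch_revd
        exact hdnt ⟨c, hc, vertRel_trans G hcr hr⟩
      · exact hdnt ⟨a, ha, hr⟩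
    have htree' : IsSubgraphTree G.rev G.rot S' := by
      refine ⟨hS'cl, hS'conn, Or.inr ?_⟩
      rw [hvc', hcard', hcount]
      omega
    have hSS1 : SS G (n + 1) = S' := by
      rw [SS_succ, gstep_eq, ← hd, ← hS', if_pos htree']
    refine ⟨by rw [hSS1]; exact htree', by rw [hSS1]; exact hsub htmem, ?_, ?_⟩
    · intro x
      rw [hSS1]
      constructor
      · rintro ⟨a, ha, hr⟩
        simp only [hS', Finset.mem_insert] at ha
        rcases ha with rfl | rfl | ha
        · exact Or.inr ⟨n, by omega, hr⟩
        · exact Or.inr ⟨n - 1, by omega, vertRel_trans G hrel_revd hr⟩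
        · rcases (htouch x).1 ⟨a, ha, hr⟩ with h | ⟨m, hm, h⟩
          · exact Or.inl h
          · exact Or.inr ⟨m, by omega, h⟩
      · rintro (h | ⟨m, hm, h⟩)
        · obtain ⟨a, ha, hr⟩ := (htouch x).2 (Or.inl h)
          exact ⟨a, hsub ha, hr⟩
        · rcases Nat.lt_succ_iff_lt_or_eq.1 hm with hm' | rfl
          · obtain ⟨a, ha, hr⟩ := (htouch x).2 (Or.inr ⟨m, hm', h⟩)
            exact ⟨a, hsub ha, hr⟩
          · exact ⟨d, hdS', h⟩
    · intro e
      rw [hSS1]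
      simp only [hS', Finset.mem_insert]
      constructor
      · rintro (rfl | rfl | he)
        · exact ⟨n, by omega, Or.inl rfl, hacc⟩
        · exact ⟨n, by omega, Or.inr (G.rev_invol d).symm, hacc⟩
        · obtain ⟨m, hm, hor, ha⟩ := (hmem e).1 he
          exact ⟨m, by omega, hor, ha⟩
      · rintro ⟨m, hm, hor, ha⟩
        rcases Nat.lt_succ_iff_lt_or_eq.1 hm with hm' | rfl
        · exact Or.inr (Or.inr ((hmem e).2 ⟨m, hm', hor, ha⟩))
        · rcases hor with h | h
          · exact Or.inl h.symm
          · right; left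
            have := congrArg G.rev h
            rw [G.rev_invol] at this
            exact this.symm
  · -- reject case
    have htch_d : ∃ a ∈ S, vertRel G.rot a d := by
      by_cases hdt : d = G.tail
      · exact ⟨G.tail, htmem, by rw [hdt]; exact vertRel_refl G _⟩
      · have : ¬ ∀ j < n, ¬ vertRel G.rot (gf G j) (gf G n) := by
          intro hall
          exact hacc ⟨hdt, hall⟩
        push_neg at this
        obtain ⟨j, hj, hr⟩ := this
        exact (htouch d).2 (Or.inr ⟨j, hj, hr⟩)
    have hSSeq : SS G (n + 1) = S := by
      rw [SS_succ, gstep_eq, ← hd]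
      by_cases hdS : d ∈ S
      · have hrd : G.rev d ∈ S := hScl _ hdS
        have heq : insert d (insert (G.rev d) S) = S := by
          rw [Finset.insert_eq_self.2 hrd, Finset.insert_eq_self.2 hdS]
        rw [heq]
        by_cases htr : IsSubgraphTree G.rev G.rot S
        · rw [if_pos htr]
        · rw [if_neg htr, hS]
      · have hrdS : G.rev d ∉ S := by
          intro h
          have := hScl _ h
          rw [G.rev_invol] at this
          exact hdS this
        have hdne : d ≠ G.rev d := fun h => G.rev_ne d h.symm
        have hvceq : vCount G.rot (insert d (insert (G.rev d) S)) = vCount G.rot S := by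
          rw [vCount_insert_mem G, vCount_insert_mem G htouch_revd]
          obtain ⟨a, ha, hr⟩ := htch_d
          exact ⟨a, Finset.mem_insert_of_mem ha, hr⟩
        have hcard' : (insert d (insert (G.rev d) S)).card = S.card + 2 := by
          rw [Finset.card_insert_of_notMem (by simp [hdne, hdS]),
            Finset.card_insert_of_notMem hrdS]
        have hnotree : ¬ IsSubgraphTree G.rev G.rot (insert d (insert (G.rev d) S)) := by
          intro ht'
          rcases ht'.2.2 with h | h
          · exact (Finset.insert_ne_empty _ _) h
          · rw [hvceq, hcard', hcount] at h
            omega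
        rw [if_neg hnotree]
    refine ⟨by rw [hSSeq]; exact htree, by rw [hSSeq]; exact htmem, ?_, ?_⟩
    · intro x
      rw [hSSeq]
      rw [htouch x]
      constructor
      · rintro (h | ⟨m, hm, h⟩)
        · exact Or.inl h
        · exact Or.inr ⟨m, by omega, h⟩
      · rintro (h | ⟨m, hm, h⟩)
        · exact Or.inl h
        · rcases Nat.lt_succ_iff_lt_or_eq.1 hm with hm' | rfl
          · exact Or.inr ⟨m, hm', h⟩
          · obtain ⟨a, ha, hr⟩ := htch_d
            rcases (htouch x).1 ⟨a, ha, vertRel_trans G hr h⟩ with h' | h'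
            · exact Or.inl h'
            · exact Or.inr h'
    · intro e
      rw [hSSeq, hmem e]
      constructor
      · rintro ⟨m, hm, hor, ha⟩
        exact ⟨m, by omega, hor, ha⟩
      · rintro ⟨m, hm, hor, ha⟩
        rcases Nat.lt_succ_iff_lt_or_eq.1 hm with hm' | rfl
        · exact ⟨m, hm', hor, ha⟩
        · exact absurd ha hacc

lemma inv_all (n : ℕ) (hn : 1 ≤ n) : Inv G n := by
  induction n, hn using Nat.le_induction with
  | base => exact inv_one G
  | succ n hn ih => exact inv_succ G n hn ih

end GreedyAux
/-- An edge (given by a dart `d` in its preferred orientation,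
i.e. appearing in the boundary traversal no later than its reversal) belongs
to the greedy spanning tree if and only if `d` is minimal, with respect to the
boundary-traversal order, among all oriented edges pointing to the same
vertex. -/
theorem greedy_membership_iff_minimal_at_vertex
    (D : Type) [Fintype D] [DecidableEq D] (G : BorderedFatgraph D)
    (d : D)
    (hpref : bPos G.rev G.rot G.tail d ≤ bPos G.rev G.rot G.tail (G.rev d)) :
    d ∈ greedyTree G.rev G.rot G.tail ↔
      ∀ x : D, vertRel G.rot x d →
        bPos G.rev G.rot G.tail d ≤ bPos G.rev G.rot G.tail x := by
  have hN2 := GreedyAux.two_le_card G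
  obtain ⟨-, -, -, hmem⟩ := GreedyAux.inv_all G (Fintype.card D) (by omega)
  rw [GreedyAux.greedy_eq_SS G]
  set n := bPos G.rev G.rot G.tail d with hn
  set n' := bPos G.rev G.rot G.tail (G.rev d) with hn'
  have hfn : GreedyAux.gf G n = d := GreedyAux.bPos_spec G d
  have hfn' : GreedyAux.gf G n' = G.rev d := GreedyAux.bPos_spec G _
  have hnlt : n < Fintype.card D := GreedyAux.bPos_lt_card G d
  have hn'lt : n' < Fintype.card D := GreedyAux.bPos_lt_card G _
  have hdrev : d ≠ G.rev d := fun h => G.rev_ne d h.symm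
  have hne : n ≠ n' := by
    intro h
    rw [h] at hfn
    exact hdrev (hfn.symm.trans hfn')
  have hnn' : n < n' := lt_of_le_of_ne hpref hne
  have hdt : d ≠ G.tail := by
    intro h
    have h1 : n = Fintype.card D - 1 := by rw [hn, h, GreedyAux.bPos_tail]
    have h2 : n' = 0 := by rw [hn', h, GreedyAux.bPos_rev_tail]
    omega
  rw [hmem d]
  constructor
  · rintro ⟨m, hm, hor, hAcc⟩
    have hmn : m = n ∨ m = n' := by
      rcases hor with h | h
      · exact Or.inl (GreedyAux.gf_inj_card G hm hnlt (by rw [h, hfn]))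
      · exact Or.inr (GreedyAux.gf_inj_card G hm hn'lt (by rw [h, hfn']))
    have hAccn : GreedyAux.AccP G n := by
      rcases hmn with rfl | rfl
      · exact hAcc
      · by_cases h0 : n = 0
        · have hA0 : GreedyAux.AccP G 0 :=
            ⟨by rw [GreedyAux.gf_zero]; exact G.rev_ne _, fun j hj => absurd hj (by omega)⟩
          exact h0 ▸ hA0
        · exfalso
          have hrev : G.rev d = G.rot (GreedyAux.gf G (n - 1)) := by
            have h := GreedyAux.rev_gf_succ G (n - 1)
            have hn1 : n - 1 + 1 = n := by omega
            rw [hn1, hfn] at h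
            exact h
          refine hAcc.2 (n - 1) (by omega) ?_
          rw [hfn', hrev]
          exact GreedyAux.vertRel_rot G _
    intro x hx
    by_contra hlt
    push_neg at hlt
    have hjlt : bPos G.rev G.rot G.tail x < Fintype.card D := GreedyAux.bPos_lt_card G x
    refine hAccn.2 (bPos G.rev G.rot G.tail x) hlt ?_
    rw [GreedyAux.bPos_spec G x, hfn]
    exact hx
  · intro hmin
    refine ⟨n, hnlt, Or.inl hfn, by rw [hfn]; exact hdt, ?_⟩
    intro j hj hr
    have hjlt : j < Fintype.card D := by omega
    rw [hfn] at hr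
    have := hmin (GreedyAux.gf G j) hr
    rw [GreedyAux.bPos_gf G hjlt] at this
    omega
end

section
/- Let C be a linear chord diagram with k chords whose underlying fatgraph has one boundary cycle, and let X_C = {x_1, ..., x_k} be the π₁-markings of the chords with preferred orientations, for a geometric π₁-marking of C. Then the marking of the reversed tail t̄ equals the product of the chord-end labels read left to right along the core (each chord end contributing the marking of the chord oriented away from that end, or its inverse), and this word in the letters X_C is reduced. -/
open Classical

/-- A linear chord diagram with `k` chords is encoded by the fixed-point-free
involution `μ` of `Fin (2*k)` matching the two endpoints of each chord, the
endpoints being attached to the core interval in left-to-right order.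
`nextGap` is the step of the boundary traversal of the underlying fatgraph,
acting on the `2*k + 1` gaps between consecutive attachment points: from the
gap just left of endpoint `g` the traversal jumps along the chord at `g` and
lands in the gap just right of the opposite endpoint `μ g`; from the rightmost
gap it wraps around the core back to the leftmost (tail) gap. -/
def nextGap {k : ℕ} (μ : Equiv.Perm (Fin (2 * k))) (g : Fin (2 * k + 1)) :
    Fin (2 * k + 1) :=
  if h : (g : ℕ) < 2 * k then Fin.succ (μ ⟨g, h⟩) else 0

/-- A matching is a bordered chord diagram when it is a fixed-point-free
involution whose gap traversal is a single cycle, i.e. the underlying fatgraph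
has exactly one boundary cycle. -/
def IsBorderedMatching {k : ℕ} (μ : Equiv.Perm (Fin (2 * k))) : Prop :=
  (∀ p, μ (μ p) = p) ∧ (∀ p, μ p ≠ p) ∧
  ∀ g g' : Fin (2 * k + 1), ∃ n : ℕ, (nextGap μ)^[n] g = g'

/-- The reverse step of the boundary traversal on gaps. -/
def prevGap {k : ℕ} (μ : Equiv.Perm (Fin (2 * k))) (g : Fin (2 * k + 1)) :
    Fin (2 * k + 1) :=
  if h : 0 < (g : ℕ) then
    Fin.castSucc (μ ⟨(g : ℕ) - 1, by have := g.isLt; omega⟩)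
  else Fin.last (2 * k)

/-- Position of the oriented chord with source endpoint `p` in the order `<`
of first traversal along the boundary cycle starting at the tail.  (The
oriented chord with source `p` is traversed at the step leaving the gap just
right of `p`.) -/
noncomputable def chordPos {k : ℕ} (μ : Equiv.Perm (Fin (2 * k)))
    (p : Fin (2 * k)) : ℕ :=
  if h : ∃ n : ℕ, (prevGap μ)^[n] 0 = Fin.succ p then Nat.find h else 0

/-- `x` immediately precedes `y` among oriented chords in the boundary order. -/
def immPrecBdry {k : ℕ} (μ : Equiv.Perm (Fin (2 * k))) (x y : Fin (2 * k)) : Prop :=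
  chordPos μ x < chordPos μ y ∧
  ∀ z : Fin (2 * k), ¬ (chordPos μ x < chordPos μ z ∧ chordPos μ z < chordPos μ y)



section aux

lemma myreduce_eq_self {α : Type*} [DecidableEq α] (L : List (α × Bool))
    (h : L.Chain' fun a b => ¬(a.1 = b.1 ∧ a.2 = !b.2)) :
    FreeGroup.reduce L = L := by
  induction L with
  | nil => rfl
  | cons x L ih =>
    have hL : FreeGroup.reduce L = L := ih h.tail
    rw [FreeGroup.reduce.cons, hL]
    cases L with
    | nil => rfl
    | cons hd tl =>
      have : ¬(x.1 = hd.1 ∧ x.2 = !hd.2) := List.isChain_cons_cons.1 h |>.1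
      simp [this]

lemma myprod_mk {α : Type*} (L : List (α × Bool)) :
    (L.map fun a => FreeGroup.mk [a]).prod = FreeGroup.mk L := by
  induction L with
  | nil => simp [FreeGroup.one_eq_mk]
  | cons x L ih =>
    simp only [List.map_cons, List.prod_cons, ih, FreeGroup.mul_mk,
      List.singleton_append]

end aux

lemma no_adjacent {k : ℕ} (μ : Equiv.Perm (Fin (2 * k)))
    (hB : IsBorderedMatching μ) (i : ℕ) (h1 : i + 1 < 2 * k)
    (hadj : μ ⟨i + 1, h1⟩ = ⟨i, by omega⟩) : False := by
  set g : Fin (2 * k + 1) := ⟨i + 1, by omega⟩ with hg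
  have hlt : ((g : ℕ)) < 2 * k := h1
  have hfix : nextGap μ g = g := by
    rw [nextGap, dif_pos hlt]
    have : (⟨(g : ℕ), hlt⟩ : Fin (2 * k)) = ⟨i + 1, h1⟩ := rfl
    rw [this, hadj]
    ext
    simp [Fin.succ]
    rfl
  obtain ⟨n, hn⟩ := hB.2.2 g 0
  have hiter : ∀ n, (nextGap μ)^[n] g = g := by
    intro n; induction n with
    | zero => rfl
    | succ n ih => rw [Function.iterate_succ_apply', ih, hfix]
  rw [hiter, hg] at hn
  exact Nat.succ_ne_zero i (congrArg Fin.val hn)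

/-- For a geometric `π₁`-marking of a bordered linear chord
diagram `C` with `k` chords (whose chords, with preferred orientations, give
the free generating set `X_C`), the marking of the reversed tail equals the
product of the chord-end labels read left to right along the core (each chord
end contributing the marking of the chord oriented away from that end), and
this word in the letters `X_C` is reduced.  Here `ch` identifies each endpoint
with a chord and a sign, `m` is the resulting chord-end label, `core` is the
marking of the (rightward oriented) core segment in each gap, subject to the
vertex compatibility conditions, and the marking of the reversed tail is the
marking `core 0` of the tail gap. -/
theorem bordered_chord_diagram_boundary_word_reduced
    (k : ℕ) (μ : Equiv.Perm (Fin (2 * k)))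
    (hB : IsBorderedMatching μ)
    (ch : Fin (2 * k) ≃ Fin k × Bool)
    (hch : ∀ p, ch (μ p) = ((ch p).1, !(ch p).2))
    (m : Fin (2 * k) → FreeGroup (Fin k))
    (hm : ∀ p, m p = if (ch p).2 then FreeGroup.of (ch p).1
                     else (FreeGroup.of (ch p).1)⁻¹)
    (core : Fin (2 * k + 1) → FreeGroup (Fin k))
    (hvertex : ∀ p : Fin (2 * k), core p.castSucc = m p * core p.succ)
    (hend : core (Fin.last (2 * k)) = 1) :
    core 0 = (List.ofFn m).prod ∧
    (FreeGroup.toWord ((List.ofFn m).prod)).length = 2 * k := by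
  classical
  -- each letter as a one-letter word
  have hm' : ∀ p, m p = FreeGroup.mk [((ch p).1, (ch p).2)] := by
    intro p
    rw [hm p]
    cases hb : (ch p).2 <;>
      simp [FreeGroup.of, FreeGroup.inv_mk, FreeGroup.invRev, hb]
  set letters : List (Fin k × Bool) := List.ofFn (fun p => ((ch p).1, (ch p).2))
    with hletters
  have hprod : (List.ofFn m).prod = FreeGroup.mk letters := by
    have hmap : letters.map (fun a => FreeGroup.mk [a]) = List.ofFn m := by
      rw [hletters, List.map_ofFn]
      exact congrArg List.ofFn (funext fun p => (hm' p).symm)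
    rw [← hmap, myprod_mk]
  have hchain : letters.Chain' fun a b => ¬(a.1 = b.1 ∧ a.2 = !b.2) := by
    rw [List.Chain', List.isChain_iff_getElem]
    intro i hi
    simp only [hletters, List.length_ofFn] at hi
    simp only [List.get_eq_getElem, hletters, List.getElem_ofFn]
    rintro ⟨h1, h2⟩
    have hce : ch ⟨i, by omega⟩ = ch (μ ⟨i + 1, by omega⟩) := by
      rw [hch]
      exact Prod.ext h1 h2
    exact no_adjacent μ hB i (by omega) (ch.injective hce).symm
  have hlen : (FreeGroup.toWord ((List.ofFn m).prod)).length = 2 * k := by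
    rw [hprod, FreeGroup.toWord_mk, myreduce_eq_self letters hchain, hletters,
      List.length_ofFn]
  refine ⟨?_, hlen⟩
  have key : ∀ n j (h : j + n = 2 * k),
      core ⟨j, by omega⟩ = ((List.ofFn m).drop j).prod := by
    intro n
    induction n with
    | zero =>
      intro j h
      have hj : j = 2 * k := by omega
      subst hj
      have : (List.ofFn m).drop (2 * k) = [] := by
        apply List.drop_eq_nil_of_le
        simp
      rw [this, List.prod_nil]
      exact hend
    | succ n ih =>
      intro j h
      have hj : j < 2 * k := by omega
      have h1 : (⟨j, by omega⟩ : Fin (2 * k + 1)) =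
          (⟨j, hj⟩ : Fin (2 * k)).castSucc := rfl
      have h2 : (⟨j, hj⟩ : Fin (2 * k)).succ =
          (⟨j + 1, by omega⟩ : Fin (2 * k + 1)) := rfl
      rw [h1, hvertex, h2, ih (j + 1) (by omega)]
      have hlt : j < (List.ofFn m).length := by simp [hj]
      rw [List.drop_eq_getElem_cons hlt, List.prod_cons, List.getElem_ofFn]
  have h0 : (0 : Fin (2 * k + 1)) = ⟨0, by omega⟩ := rfl
  rw [h0, key (2 * k) 0 (by omega), List.drop_zero]
end

section
/- Given a free generating set X of a free group F, there is at most one bordered linear chord diagram C (up to isomorphism) whose set of chord generators X_C equals X up to permutation and inverting any subset of the elements. -/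
open Classical

lemma reduce_eq_self_of_chain' {α : Type*} [DecidableEq α] {L : List (α × Bool)}
    (h : List.Chain' (fun a b : α × Bool => ¬(a.1 = b.1 ∧ a.2 = !b.2)) L) :
    FreeGroup.reduce L = L := by
  induction L with
  | nil => rfl
  | cons x L ih =>
    rw [FreeGroup.reduce.cons, ih h.tail]
    cases L with
    | nil => rfl
    | cons y t =>
      show (if x.1 = y.1 ∧ x.2 = !y.2 then t else x :: y :: t) = x :: y :: t
      rw [if_neg (List.isChain_cons_cons.mp h).1]

set_option maxHeartbeats 1000000 in
lemma diagram_letters {k : ℕ} {G : Type} [Group G] {X : Fin k → G}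
    (hX : Function.Bijective (FreeGroup.lift X : FreeGroup (Fin k) →* G))
    (μ : Equiv.Perm (Fin (2 * k))) (m : Fin (2 * k) → G)
    (h : IsBorderedMatching μ)
    (hm : ∀ p, m (μ p) = (m p)⁻¹)
    (hval : ∀ p, ∃ j, m p = X j ∨ m p = (X j)⁻¹)
    (hsur : ∀ j, ∃ p, m p = X j ∨ m p = (X j)⁻¹) :
    ∃ s : Fin (2 * k) → Fin k × Bool,
      (∀ p, m p = cond (s p).2 (X (s p).1) (X (s p).1)⁻¹) ∧
      Function.Injective m ∧
      FreeGroup.reduce (List.ofFn s) = List.ofFn s := by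
  set f : Fin k × Bool → G := fun x => (FreeGroup.lift X) (FreeGroup.mk [x]) with hf
  have hfc : ∀ x : Fin k × Bool, f x = cond x.2 (X x.1) (X x.1)⁻¹ := by
    intro x; simp [hf, FreeGroup.lift_mk]
  have hfinj : Function.Injective f := by
    intro x y hxy
    have h1 : FreeGroup.mk [x] = FreeGroup.mk [y] := hX.1 hxy
    have h2 := congrArg FreeGroup.toWord h1
    simpa [FreeGroup.toWord_mk, FreeGroup.reduce_singleton] using h2
  have hfinv : ∀ x : Fin k × Bool, f (x.1, !x.2) = (f x)⁻¹ := by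
    rintro ⟨j, b⟩; cases b <;> simp [hfc]
  have hs : ∀ p, ∃ x : Fin k × Bool, m p = f x := by
    intro p
    obtain ⟨j, hj | hj⟩ := hval p
    · exact ⟨(j, true), by simp [hfc, hj]⟩
    · exact ⟨(j, false), by simp [hfc, hj]⟩
  choose s hsm using hs
  have hflip : ∀ p, s (μ p) = ((s p).1, !(s p).2) := by
    intro p
    apply hfinj
    rw [← hsm, hfinv, ← hsm, hm]
  have hssurj : Function.Surjective s := by
    rintro ⟨j, b⟩
    obtain ⟨p, hp | hp⟩ := hsur j
    · have hp' : s p = (j, true) := by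
        apply hfinj; rw [← hsm, hp]; simp [hfc]
      cases b
      · exact ⟨μ p, by simp [hflip, hp']⟩
      · exact ⟨p, hp'⟩
    · have hp' : s p = (j, false) := by
        apply hfinj; rw [← hsm, hp]; simp [hfc]
      cases b
      · exact ⟨p, hp'⟩
      · exact ⟨μ p, by simp [hflip, hp']⟩
  have hsinj : Function.Injective s := by
    have := (Fintype.bijective_iff_surjective_and_card s).mpr
      ⟨hssurj, by simp [mul_comm]⟩
    exact this.injective
  have hminj : Function.Injective m := by
    intro p q hpq
    apply hsinj; apply hfinj
    rw [← hsm, ← hsm, hpq]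
  refine ⟨s, fun p => by rw [hsm, hfc], hminj, reduce_eq_self_of_chain' ?_⟩
  rw [List.Chain', List.isChain_iff_getElem]
  intro i hi
  simp only [List.length_ofFn] at hi
  rintro ⟨h1, h2⟩
  simp only [List.getElem_ofFn] at h1 h2
  have hik : i + 1 < 2 * k := by omega
  have hik0 : i < 2 * k := by omega
  have h1' : (s ⟨i, hik0⟩).1 = (s ⟨i + 1, hik⟩).1 := h1
  have h2' : (s ⟨i, hik0⟩).2 = !(s ⟨i + 1, hik⟩).2 := h2
  have hmu : μ ⟨i, hik0⟩ = ⟨i + 1, hik⟩ := by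
    apply hsinj
    rw [hflip]
    have hb : (s ⟨i + 1, hik⟩).2 = !(s ⟨i, hik0⟩).2 := by
      cases hb : (s ⟨i, hik0⟩).2 <;> cases hb' : (s ⟨i + 1, hik⟩).2 <;> simp_all
    exact Prod.ext h1' hb.symm
  have hfix : nextGap μ ⟨i + 1, by omega⟩ = ⟨i + 1, by omega⟩ := by
    rw [nextGap, dif_pos (show i + 1 < 2 * k from hik)]
    have he : (⟨i + 1, hik⟩ : Fin (2 * k)) = μ ⟨i, hik0⟩ := hmu.symm
    rw [show (⟨(((⟨i + 1, by omega⟩ : Fin (2 * k + 1)) : ℕ)), hik⟩ : Fin (2 * k)) = μ ⟨i, hik0⟩ from hmu.symm, h.1]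
    apply Fin.ext
    simp [Fin.val_succ]
  obtain ⟨n, hn⟩ := h.2.2 ⟨i + 1, by omega⟩ 0
  rw [Function.iterate_fixed hfix n] at hn
  simp [Fin.ext_iff] at hn

/-- Given a free generating set `X` of a free group `G` (and the
fixed boundary element `δ` of the geometricity condition), there is at most
one bordered linear chord diagram, with geometric marking, whose set of chord
generators equals `X` up to permutation and inverting any subset of the
elements: two such marked diagrams coincide. -/
theorem bordered_chord_diagram_unique_for_generating_set
    (k : ℕ) (G : Type) [Group G] (X : Fin k → G)
    (hX : Function.Bijective (FreeGroup.lift X : FreeGroup (Fin k) →* G))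
    (δ : G)
    (μ₁ μ₂ : Equiv.Perm (Fin (2 * k))) (m₁ m₂ : Fin (2 * k) → G)
    (h₁ : IsBorderedMatching μ₁) (h₂ : IsBorderedMatching μ₂)
    (hm₁ : ∀ p, m₁ (μ₁ p) = (m₁ p)⁻¹) (hm₂ : ∀ p, m₂ (μ₂ p) = (m₂ p)⁻¹)
    (hval₁ : ∀ p, ∃ j, m₁ p = X j ∨ m₁ p = (X j)⁻¹)
    (hval₂ : ∀ p, ∃ j, m₂ p = X j ∨ m₂ p = (X j)⁻¹)
    (hsur₁ : ∀ j, ∃ p, m₁ p = X j ∨ m₁ p = (X j)⁻¹)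
    (hsur₂ : ∀ j, ∃ p, m₂ p = X j ∨ m₂ p = (X j)⁻¹)
    (hδ₁ : (List.ofFn m₁).prod = δ) (hδ₂ : (List.ofFn m₂).prod = δ) :
    μ₁ = μ₂ ∧ m₁ = m₂ := by
  obtain ⟨s₁, hc₁, hinj₁, hr₁⟩ := diagram_letters hX μ₁ m₁ h₁ hm₁ hval₁ hsur₁
  obtain ⟨s₂, hc₂, hinj₂, hr₂⟩ := diagram_letters hX μ₂ m₂ h₂ hm₂ hval₂ hsur₂
  have hlift : ∀ (s : Fin (2 * k) → Fin k × Bool) (m : Fin (2 * k) → G),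
      (∀ p, m p = cond (s p).2 (X (s p).1) (X (s p).1)⁻¹) →
      FreeGroup.lift X (FreeGroup.mk (List.ofFn s)) = (List.ofFn m).prod := by
    intro s m hc
    rw [FreeGroup.lift_mk, List.map_ofFn]
    exact congrArg List.prod (congrArg List.ofFn (funext fun p => (hc p).symm))
  have hmkeq : FreeGroup.mk (List.ofFn s₁) = FreeGroup.mk (List.ofFn s₂) :=
    hX.1 (by rw [hlift s₁ m₁ hc₁, hlift s₂ m₂ hc₂, hδ₁, hδ₂])
  have hL : List.ofFn s₁ = List.ofFn s₂ := by
    have := congrArg FreeGroup.toWord hmkeq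
    rwa [FreeGroup.toWord_mk, FreeGroup.toWord_mk, hr₁, hr₂] at this
  have hs : s₁ = s₂ := List.ofFn_injective hL
  have hmeq : m₁ = m₂ := funext fun p => by rw [hc₁, hc₂, hs]
  refine ⟨Equiv.ext fun p => ?_, hmeq⟩
  apply hinj₁
  rw [hm₁ p, hmeq, hm₂ p, ← hmeq]
end

section
/- The dual chord diagram Ĉ of a genus g bordered chord diagram C is again a genus g bordered chord diagram (i.e., its underlying fatgraph has exactly one boundary cycle and the same genus). -/
open Classical

namespace DualPf

lemma iterate_left_inv {α : Type*} {f e : α → α} (he : ∀ x, e (f x) = x) :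
    ∀ n x, e^[n] (f^[n] x) = x := by
  intro n
  induction n with
  | zero => intro x; rfl
  | succ n ih =>
    intro x
    rw [Function.iterate_succ_apply' f, Function.iterate_succ_apply e, he]
    exact ih x

lemma card_le_of_iterate_fixed {α : Type*} [Fintype α] (f : α → α) (a : α)
    (htrans : ∀ b, ∃ n, f^[n] a = b) {d : ℕ} (hd : 0 < d) (hfix : f^[d] a = a) :
    Fintype.card α ≤ d := by
  have hsurj : Function.Surjective (fun i : Fin d => f^[(i : ℕ)] a) := by
    intro b
    obtain ⟨n, hn⟩ := htrans b
    refine ⟨⟨n % d, Nat.mod_lt _ hd⟩, ?_⟩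
    have h1 : f^[n] a = f^[n % d] a := by
      conv_lhs => rw [← Nat.mod_add_div n d]
      rw [Function.iterate_add_apply, Function.iterate_mul,
        Function.iterate_fixed hfix]
    simp only [← h1, hn]
  simpa using Fintype.card_le_of_surjective _ hsurj

lemma iterate_inj_aux {α : Type*} [Fintype α] (f e : α → α) (he : ∀ x, e (f x) = x)
    (a : α) (htrans : ∀ b, ∃ n, f^[n] a = b) {m m' : ℕ} (hmm : m ≤ m')
    (hm' : m' < Fintype.card α) (h : f^[m] a = f^[m'] a) : m = m' := by
  have h2 : f^[m'] a = f^[m] (f^[m' - m] a) := by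
    rw [← Function.iterate_add_apply]
    congr 1
    omega
  have h3 : f^[m' - m] a = a := by
    have := congrArg (e^[m]) (h2 ▸ h)
    rw [iterate_left_inv he, iterate_left_inv he] at this
    exact this.symm
  by_contra hne
  have hd : 0 < m' - m := by omega
  have := card_le_of_iterate_fixed f a htrans hd h3
  omega

lemma iterate_inj {α : Type*} [Fintype α] (f e : α → α) (he : ∀ x, e (f x) = x)
    (a : α) (htrans : ∀ b, ∃ n, f^[n] a = b) {m m' : ℕ}
    (hm : m < Fintype.card α) (hm' : m' < Fintype.card α)
    (h : f^[m] a = f^[m'] a) : m = m' := by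
  rcases le_total m m' with hle | hle
  · exact iterate_inj_aux f e he a htrans hle hm' h
  · exact (iterate_inj_aux f e he a htrans hle hm h.symm).symm

section Main

variable {k : ℕ} (μ : Equiv.Perm (Fin (2 * k)))

lemma pn (hinv : ∀ p, μ (μ p) = p) (x : Fin (2 * k + 1)) :
    prevGap μ (nextGap μ x) = x := by
  by_cases h : (x : ℕ) < 2 * k
  · rw [nextGap, dif_pos h, prevGap,
      dif_pos (by simp [Fin.val_succ] : 0 < ((Fin.succ (μ ⟨x, h⟩) : Fin (2*k+1)) : ℕ))]
    have h1 : (⟨((Fin.succ (μ ⟨(x:ℕ), h⟩) : Fin (2*k+1)) : ℕ) - 1, by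
        have := (μ ⟨(x:ℕ), h⟩).isLt; simp [Fin.val_succ]⟩ : Fin (2*k)) = μ ⟨x, h⟩ := by
      ext; simp [Fin.val_succ]
    rw [h1, hinv]
    ext; simp
  · rw [nextGap, dif_neg h, prevGap, dif_neg (by simp)]
    ext
    simp [Fin.last]
    omega

lemma np (hinv : ∀ p, μ (μ p) = p) (x : Fin (2 * k + 1)) :
    nextGap μ (prevGap μ x) = x := by
  by_cases h : 0 < (x : ℕ)
  · have hlt : ((x:ℕ) - 1) < 2 * k := by have := x.isLt; omega
    rw [prevGap, dif_pos h, nextGap,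
      dif_pos (by simpa using (μ ⟨(x:ℕ)-1, hlt⟩).isLt)]
    have h1 : (⟨((Fin.castSucc (μ ⟨(x:ℕ)-1, hlt⟩) : Fin (2*k+1)) : ℕ), by
        simpa using (μ ⟨(x:ℕ)-1, hlt⟩).isLt⟩ : Fin (2*k)) = μ ⟨(x:ℕ)-1, hlt⟩ := by
      ext; simp
    rw [h1, hinv]
    ext; simp [Fin.val_succ]; omega
  · rw [prevGap, dif_neg h, nextGap, dif_neg (by simp [Fin.last])]
    ext; simp; omega

lemma honeP (hinv : ∀ p, μ (μ p) = p)
    (hone : ∀ g g' : Fin (2 * k + 1), ∃ n : ℕ, (nextGap μ)^[n] g = g')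
    (x y : Fin (2 * k + 1)) : ∃ n, (prevGap μ)^[n] x = y := by
  obtain ⟨n, hn⟩ := hone y x
  exact ⟨n, by rw [← hn, iterate_left_inv (pn μ hinv)]⟩

-- iterates of nextGap starting at 0, with exponents ≤ 2k, are injective
lemma A_inj (hinv : ∀ p, μ (μ p) = p)
    (hone : ∀ g g' : Fin (2 * k + 1), ∃ n : ℕ, (nextGap μ)^[n] g = g')
    {m m' : ℕ} (hm : m ≤ 2 * k) (hm' : m' ≤ 2 * k)
    (h : (nextGap μ)^[m] 0 = (nextGap μ)^[m'] 0) : m = m' := by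
  refine iterate_inj (nextGap μ) (prevGap μ) (pn μ hinv) 0 (fun b => hone 0 b) ?_ ?_ h <;>
    simp <;> omega

lemma B_inj (hinv : ∀ p, μ (μ p) = p)
    (hone : ∀ g g' : Fin (2 * k + 1), ∃ n : ℕ, (nextGap μ)^[n] g = g')
    {m m' : ℕ} (hm : m ≤ 2 * k) (hm' : m' ≤ 2 * k)
    (h : (prevGap μ)^[m] 0 = (prevGap μ)^[m'] 0) : m = m' := by
  refine iterate_inj (prevGap μ) (nextGap μ) (np μ hinv) 0
    (fun b => honeP μ hinv hone 0 b) ?_ ?_ h <;> simp <;> omega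

lemma B_surj (hinv : ∀ p, μ (μ p) = p)
    (hone : ∀ g g' : Fin (2 * k + 1), ∃ n : ℕ, (nextGap μ)^[n] g = g')
    (y : Fin (2 * k + 1)) : ∃ m ≤ 2 * k, (prevGap μ)^[m] 0 = y := by
  have hinj : Function.Injective (fun i : Fin (2*k+1) => (prevGap μ)^[(i : ℕ)] 0) := by
    intro i j hij
    exact Fin.ext (B_inj μ hinv hone (by omega) (by omega) hij)
  obtain ⟨i, hi⟩ := Finite.injective_iff_surjective.mp hinj y
  exact ⟨(i : ℕ), by omega, hi⟩

lemma A_surj (hinv : ∀ p, μ (μ p) = p)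
    (hone : ∀ g g' : Fin (2 * k + 1), ∃ n : ℕ, (nextGap μ)^[n] g = g')
    (y : Fin (2 * k + 1)) : ∃ m ≤ 2 * k, (nextGap μ)^[m] 0 = y := by
  have hinj : Function.Injective (fun i : Fin (2*k+1) => (nextGap μ)^[(i : ℕ)] 0) := by
    intro i j hij
    exact Fin.ext (A_inj μ hinv hone (by omega) (by omega) hij)
  obtain ⟨i, hi⟩ := Finite.injective_iff_surjective.mp hinj y
  exact ⟨(i : ℕ), by omega, hi⟩

/-- the full traversal returns to the tail gap after 2k+1 steps -/
lemma fullP (hinv : ∀ p, μ (μ p) = p)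
    (hone : ∀ g g' : Fin (2 * k + 1), ∃ n : ℕ, (nextGap μ)^[n] g = g') :
    (nextGap μ)^[2 * k + 1] 0 = 0 := by
  obtain ⟨i, hi, h⟩ := A_surj μ hinv hone ((nextGap μ)^[2 * k + 1] 0)
  have h2 : (nextGap μ)^[2 * k + 1] 0 = (nextGap μ)^[i] ((nextGap μ)^[2 * k + 1 - i] 0) := by
    rw [← Function.iterate_add_apply]
    congr 1
    omega
  have h3 : (nextGap μ)^[2 * k + 1 - i] 0 = 0 := by
    have h4 : (nextGap μ)^[i] ((nextGap μ)^[2 * k + 1 - i] 0) = (nextGap μ)^[i] 0 :=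
      h2.symm.trans h.symm
    have h5 := congrArg ((prevGap μ)^[i]) h4
    rwa [iterate_left_inv (pn μ hinv), iterate_left_inv (pn μ hinv)] at h5
  have hcard := card_le_of_iterate_fixed (nextGap μ) 0 (fun b => hone 0 b)
    (d := 2 * k + 1 - i) (by omega) h3
  simp at hcard
  have hi0 : i = 0 := by omega
  rw [hi0] at h
  simpa using h.symm

/-- the gap just before returning is the last gap -/
lemma lastQ (hinv : ∀ p, μ (μ p) = p)
    (hone : ∀ g g' : Fin (2 * k + 1), ∃ n : ℕ, (nextGap μ)^[n] g = g') :
    (nextGap μ)^[2 * k] 0 = Fin.last (2 * k) := by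
  have h : nextGap μ ((nextGap μ)^[2 * k] 0) = 0 := by
    have := fullP μ hinv hone
    rwa [Function.iterate_succ_apply'] at this
  by_contra hne
  have hlt : (((nextGap μ)^[2 * k] 0 : Fin (2*k+1)) : ℕ) < 2 * k := by
    have := ((nextGap μ)^[2 * k] 0).isLt
    rcases Nat.lt_or_ge (((nextGap μ)^[2 * k] 0 : Fin (2*k+1)) : ℕ) (2*k) with h' | h'
    · exact h'
    · exact absurd (Fin.ext (by simp [Fin.last]; omega)) hne
  rw [nextGap, dif_pos hlt] at h
  exact Fin.succ_ne_zero _ h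

lemma hex (hinv : ∀ p, μ (μ p) = p)
    (hone : ∀ g g' : Fin (2 * k + 1), ∃ n : ℕ, (nextGap μ)^[n] g = g')
    (p : Fin (2 * k)) : ∃ n, (prevGap μ)^[n] 0 = Fin.succ p :=
  honeP μ hinv hone 0 _

lemma cspec (hinv : ∀ p, μ (μ p) = p)
    (hone : ∀ g g' : Fin (2 * k + 1), ∃ n : ℕ, (nextGap μ)^[n] g = g')
    (p : Fin (2 * k)) : (prevGap μ)^[chordPos μ p] 0 = Fin.succ p := by
  rw [chordPos, dif_pos (hex μ hinv hone p)]
  exact Nat.find_spec (hex μ hinv hone p)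

lemma cpos (hinv : ∀ p, μ (μ p) = p)
    (hone : ∀ g g' : Fin (2 * k + 1), ∃ n : ℕ, (nextGap μ)^[n] g = g')
    (p : Fin (2 * k)) : 1 ≤ chordPos μ p := by
  by_contra hcon
  have h0 : chordPos μ p = 0 := by omega
  have h1 := cspec μ hinv hone p
  rw [h0, Function.iterate_zero_apply] at h1
  exact Fin.succ_ne_zero p h1.symm

lemma cle (hinv : ∀ p, μ (μ p) = p)
    (hone : ∀ g g' : Fin (2 * k + 1), ∃ n : ℕ, (nextGap μ)^[n] g = g')
    (p : Fin (2 * k)) : chordPos μ p ≤ 2 * k := by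
  obtain ⟨m, hm, h⟩ := B_surj μ hinv hone (Fin.succ p)
  rw [chordPos, dif_pos (hex μ hinv hone p)]
  exact le_trans (Nat.find_min' _ h) hm

lemma c_inj (hinv : ∀ p, μ (μ p) = p)
    (hone : ∀ g g' : Fin (2 * k + 1), ∃ n : ℕ, (nextGap μ)^[n] g = g')
    {p q : Fin (2 * k)} (h : chordPos μ p = chordPos μ q) : p = q := by
  have h1 := cspec μ hinv hone p
  have h2 := cspec μ hinv hone q
  rw [h] at h1
  have := h1.symm.trans h2
  exact Fin.succ_injective _ this

lemma R1 (hinv : ∀ p, μ (μ p) = p)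
    (hone : ∀ g g' : Fin (2 * k + 1), ∃ n : ℕ, (nextGap μ)^[n] g = g')
    (p : Fin (2 * k)) :
    (nextGap μ)^[2 * k + 1 - chordPos μ p] 0 = Fin.succ p := by
  have h1 : (nextGap μ)^[chordPos μ p] (Fin.succ p) = 0 := by
    rw [← cspec μ hinv hone p]
    exact iterate_left_inv (np μ hinv) _ 0
  have h2 : (nextGap μ)^[chordPos μ p] ((nextGap μ)^[2 * k + 1 - chordPos μ p] 0) = 0 := by
    rw [← Function.iterate_add_apply]
    have harith : chordPos μ p + (2 * k + 1 - chordPos μ p) = 2 * k + 1 := by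
      have := cle μ hinv hone p
      omega
    rw [harith]
    exact fullP μ hinv hone
  have h3 := congrArg ((prevGap μ)^[chordPos μ p]) (h2.trans h1.symm)
  rwa [iterate_left_inv (pn μ hinv), iterate_left_inv (pn μ hinv)] at h3

lemma R2 (hinv : ∀ p, μ (μ p) = p)
    (hone : ∀ g g' : Fin (2 * k + 1), ∃ n : ℕ, (nextGap μ)^[n] g = g')
    (q : Fin (2 * k)) :
    (nextGap μ)^[2 * k - chordPos μ (μ q)] 0 = Fin.castSucc q := by
  have hstep : nextGap μ (Fin.castSucc q) = Fin.succ (μ q) := by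
    rw [nextGap, dif_pos (by simpa using q.isLt)]
    have hq : (⟨((Fin.castSucc q : Fin (2 * k + 1)) : ℕ), by simpa using q.isLt⟩
        : Fin (2 * k)) = q := by ext; simp
    rw [hq]
  have h1 : nextGap μ ((nextGap μ)^[2 * k - chordPos μ (μ q)] 0) = Fin.succ (μ q) := by
    have harith : (2 * k - chordPos μ (μ q)) + 1 = 2 * k + 1 - chordPos μ (μ q) := by
      have := cle μ hinv hone (μ q)
      have := cpos μ hinv hone (μ q)
      omega
    have := R1 μ hinv hone (μ q)
    rw [← harith, Function.iterate_succ_apply'] at this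
    exact this
  have h2 := congrArg (prevGap μ) (h1.trans hstep.symm)
  rwa [pn μ hinv, pn μ hinv] at h2

lemma rank_eq {n : ℕ} (e : Fin n → Fin n) (he : Function.Bijective e) (p : Fin n) :
    (Finset.univ.filter (fun q => e q < e p)).card = ((e p : ℕ)) := by
  classical
  have himg : Finset.image e (Finset.univ.filter (fun q => e q < e p))
      = Finset.Iio (e p) := by
    ext v
    simp only [Finset.mem_image, Finset.mem_filter, Finset.mem_univ, true_and,
      Finset.mem_Iio]
    constructor
    · rintro ⟨q, hq, rfl⟩; exact hq
    · intro hv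
      obtain ⟨q, rfl⟩ := he.2 v
      exact ⟨q, hv, rfl⟩
  have hc := Finset.card_image_of_injective
    (Finset.univ.filter (fun q => e q < e p)) he.1
  rw [himg] at hc
  rw [← hc, Fin.card_Iio]

lemma rval (hinv : ∀ p, μ (μ p) = p)
    (hone : ∀ g g' : Fin (2 * k + 1), ∃ n : ℕ, (nextGap μ)^[n] g = g')
    (r : Equiv.Perm (Fin (2 * k)))
    (hr : ∀ p q, chordPos μ p < chordPos μ q ↔ (r p : ℕ) < (r q : ℕ))
    (p : Fin (2 * k)) : (r p : ℕ) = chordPos μ p - 1 := by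
  classical
  have hs : ∀ q : Fin (2 * k), chordPos μ q - 1 < 2 * k := by
    intro q
    have h1 := cle μ hinv hone q
    have h2 := cpos μ hinv hone q
    have := q.isLt
    omega
  set s : Fin (2 * k) → Fin (2 * k) := fun q => ⟨chordPos μ q - 1, hs q⟩ with hsdef
  have hsinj : Function.Injective s := by
    intro a b hab
    apply c_inj μ hinv hone
    have h1 := cpos μ hinv hone a
    have h2 := cpos μ hinv hone b
    have := congrArg Fin.val hab
    simp only [hsdef] at this
    omega
  have hsbij : Function.Bijective s := Finite.injective_iff_bijective.mp hsinj
  have hfilter : Finset.univ.filter (fun q => r q < r p)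
      = Finset.univ.filter (fun q => s q < s p) := by
    apply Finset.filter_congr
    intro q _
    have h1 := cpos μ hinv hone q
    have h2 := cpos μ hinv hone p
    simp only [Fin.lt_def, hsdef, ← hr]
    constructor <;> intro <;> omega
  have h1 := rank_eq r r.bijective p
  have h2 := rank_eq s hsbij p
  rw [hfilter, h2] at h1
  have h3 : (s p : ℕ) = chordPos μ p - 1 := rfl
  omega

/-- cyclic decrement on gaps -/
def Gmap (k : ℕ) (u : Fin (2 * k + 1)) : Fin (2 * k + 1) :=
  if _ : 0 < (u : ℕ) then ⟨(u : ℕ) - 1, by have := u.isLt; omega⟩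
  else ⟨2 * k, by omega⟩

/-- parametrization of the gaps by the (reversed) traversal of `μ` -/
def psi (u : Fin (2 * k + 1)) : Fin (2 * k + 1) :=
  (nextGap μ)^[2 * k - (u : ℕ)] 0

lemma Gmap_iter_sub (k : ℕ) : ∀ (n : ℕ) (u : Fin (2 * k + 1)), n ≤ (u : ℕ) →
    (Gmap k)^[n] u = ⟨(u : ℕ) - n, by have := u.isLt; omega⟩ := by
  intro n
  induction n with
  | zero => intro u _; ext; simp
  | succ n ih =>
    intro u hn
    rw [Function.iterate_succ_apply]
    have hG : Gmap k u = ⟨(u : ℕ) - 1, by have := u.isLt; omega⟩ := by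
      rw [Gmap, dif_pos (by omega)]
    rw [hG, ih _ (by simp; omega)]
    ext
    simp
    omega

lemma Gmap_trans (k : ℕ) (u u' : Fin (2 * k + 1)) : ∃ n, (Gmap k)^[n] u = u' := by
  have h0 : (Gmap k)^[(u : ℕ)] u = 0 := by
    rw [Gmap_iter_sub k _ u le_rfl]
    ext; simp
  have h1 : Gmap k 0 = ⟨2 * k, by omega⟩ := by
    rw [Gmap, dif_neg (by simp)]
  have h2 : (Gmap k)^[2 * k - (u' : ℕ)] (⟨2 * k, by omega⟩ : Fin (2 * k + 1)) = u' := by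
    rw [Gmap_iter_sub k _ _ (by simp)]
    ext
    simp
    have := u'.isLt
    omega
  refine ⟨(2 * k - (u' : ℕ)) + (1 + (u : ℕ)), ?_⟩
  rw [Function.iterate_add_apply, Function.iterate_add_apply,
    Function.iterate_one, h0, h1, h2]

lemma psi_inj (hinv : ∀ p, μ (μ p) = p)
    (hone : ∀ g g' : Fin (2 * k + 1), ∃ n : ℕ, (nextGap μ)^[n] g = g') :
    Function.Injective (psi μ) := by
  intro u v huv
  have hu := u.isLt
  have hv := v.isLt
  have := A_inj μ hinv hone (m := 2 * k - (u : ℕ)) (m' := 2 * k - (v : ℕ))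
    (by omega) (by omega) huv
  ext
  omega

lemma key (hinv : ∀ p, μ (μ p) = p)
    (hone : ∀ g g' : Fin (2 * k + 1), ∃ n : ℕ, (nextGap μ)^[n] g = g')
    (r : Equiv.Perm (Fin (2 * k)))
    (hr : ∀ p q, chordPos μ p < chordPos μ q ↔ (r p : ℕ) < (r q : ℕ))
    (u : Fin (2 * k + 1)) :
    psi μ (nextGap (r * μ * r⁻¹) u) = Gmap k (psi μ u) := by
  by_cases h : (u : ℕ) < 2 * k
  · set p := r⁻¹ (⟨(u : ℕ), h⟩ : Fin (2 * k)) with hp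
    have hrp : r p = ⟨(u : ℕ), h⟩ := by simp [hp]
    have hcp : chordPos μ p = (u : ℕ) + 1 := by
      have h1 := rval μ hinv hone r hr p
      have h2 := cpos μ hinv hone p
      rw [hrp] at h1
      simp at h1
      omega
    have hTval : chordPos μ (μ p) < 2 * k + 1 := by
      have := cle μ hinv hone (μ p)
      omega
    have hT : nextGap (r * μ * r⁻¹) u = ⟨chordPos μ (μ p), hTval⟩ := by
      rw [nextGap, dif_pos h]
      have happ : (r * μ * r⁻¹) (⟨(u : ℕ), h⟩ : Fin (2 * k)) = r (μ p) := by
        simp [Equiv.Perm.mul_apply, hp]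
      rw [happ]
      have h1 := rval μ hinv hone r hr (μ p)
      have h2 := cpos μ hinv hone (μ p)
      ext
      simp [Fin.val_succ, h1]
      omega
    have hpsiT : psi μ (nextGap (r * μ * r⁻¹) u) = Fin.castSucc p := by
      rw [hT]
      show (nextGap μ)^[2 * k - chordPos μ (μ p)] 0 = Fin.castSucc p
      exact R2 μ hinv hone p
    have hpsiu : psi μ u = Fin.succ p := by
      show (nextGap μ)^[2 * k - (u : ℕ)] 0 = Fin.succ p
      have harith : 2 * k - (u : ℕ) = 2 * k + 1 - chordPos μ p := by
        rw [hcp]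
        omega
      rw [harith]
      exact R1 μ hinv hone p
    rw [hpsiT, hpsiu, Gmap, dif_pos (by simp [Fin.val_succ])]
    ext
    simp [Fin.val_succ]
  · have hu : (u : ℕ) = 2 * k := by have := u.isLt; omega
    have hT : nextGap (r * μ * r⁻¹) u = 0 := by
      rw [nextGap, dif_neg h]
    rw [hT]
    show (nextGap μ)^[2 * k - ((0 : Fin (2 * k + 1)) : ℕ)] 0
      = Gmap k ((nextGap μ)^[2 * k - (u : ℕ)] 0)
    rw [hu]
    simp only [Fin.val_zero, Nat.sub_zero, Nat.sub_self, Function.iterate_zero_apply]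
    rw [lastQ μ hinv hone, Gmap, dif_neg (by simp)]
    ext
    simp [Fin.last]

lemma key_iter (hinv : ∀ p, μ (μ p) = p)
    (hone : ∀ g g' : Fin (2 * k + 1), ∃ n : ℕ, (nextGap μ)^[n] g = g')
    (r : Equiv.Perm (Fin (2 * k)))
    (hr : ∀ p q, chordPos μ p < chordPos μ q ↔ (r p : ℕ) < (r q : ℕ)) :
    ∀ (n : ℕ) (u : Fin (2 * k + 1)),
      psi μ ((nextGap (r * μ * r⁻¹))^[n] u) = (Gmap k)^[n] (psi μ u) := by
  intro n
  induction n with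
  | zero => intro u; rfl
  | succ n ih =>
    intro u
    rw [Function.iterate_succ_apply', Function.iterate_succ_apply',
      key μ hinv hone r hr, ih]

lemma nu_trans (hinv : ∀ p, μ (μ p) = p)
    (hone : ∀ g g' : Fin (2 * k + 1), ∃ n : ℕ, (nextGap μ)^[n] g = g')
    (r : Equiv.Perm (Fin (2 * k)))
    (hr : ∀ p q, chordPos μ p < chordPos μ q ↔ (r p : ℕ) < (r q : ℕ))
    (g g' : Fin (2 * k + 1)) : ∃ n, (nextGap (r * μ * r⁻¹))^[n] g = g' := by
  obtain ⟨n, hn⟩ := Gmap_trans k (psi μ g) (psi μ g')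
  refine ⟨n, psi_inj μ hinv hone ?_⟩
  rw [key_iter μ hinv hone r hr, hn]

end Main

end DualPf

/-- The dual chord diagram (obtained by rearranging the chords
along the core according to the boundary-traversal order, i.e. conjugating the
matching by the rank permutation `r` of the boundary order) of a genus `g`
bordered chord diagram (one with `2*g` chords and one boundary cycle) is again
a genus `g` bordered chord diagram: it has the same number `2*g` of chords and
its underlying fatgraph again has exactly one boundary cycle. -/
theorem dual_of_bordered_is_bordered
    (g : ℕ) (μ : Equiv.Perm (Fin (2 * (2 * g))))
    (hB : IsBorderedMatching μ)
    (r : Equiv.Perm (Fin (2 * (2 * g))))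
    (hr : ∀ p q, chordPos μ p < chordPos μ q ↔ (r p : ℕ) < (r q : ℕ)) :
    IsBorderedMatching (r * μ * r⁻¹) := by
  obtain ⟨hinv, hfree, hone⟩ := hB
  refine ⟨?_, ?_, ?_⟩
  · intro p
    simp [Equiv.Perm.mul_apply, hinv]
  · intro p hcon
    apply hfree (r⁻¹ p)
    simp only [Equiv.Perm.mul_apply] at hcon
    have := congrArg (⇑r⁻¹) hcon
    simpa using this
  · exact DualPf.nu_trans (k := 2 * g) μ hinv hone r hr
end
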